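/- Let E be an elliptic curve and let D, D' be divisors on E with deg(inf{D, D'}) > 0, where inf and sup are taken coefficient-wise. Then H^0(E, O(D)) + H^0(E, O(D')) = H^0(E, O(sup{D, D'})), as subspaces of the function field k(E). -/

import Mathlib

/- STATEMENT 7:
Let `E` be an elliptic curve and let `D, D'` be divisors on `E` with `deg (inf {D, D'}) > 0`
(inf and sup taken coefficientwise). Then
`H^0(E, O(D)) + H^0(E, O(D')) = H^0(E, O(sup {D, D'}))` as subspaces of the function field.

The elliptic curve is encoded through its function field `K` over `k`: divisors are finitely
supported `ℤ`-valued functions on the set `Pt` of points, and `sec D = H^0(E, O(D)) ⊆ K` is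
a finite-dimensional subspace satisfying Riemann–Roch for genus one
(`dim H^0(O(D)) = deg D` when `deg D > 0`) and `|D| ⊓ |D'| = |inf{D, D'}|`. -/

/-- The degree of a divisor. -/
def degD {Pt : Type} (D : Pt →₀ ℤ) : ℤ := D.sum fun _ n => n

lemma degD_add {Pt : Type} (A B : Pt →₀ ℤ) : degD (A + B) = degD A + degD B :=
  Finsupp.sum_add_index' (fun _ => rfl) (fun _ _ _ => rfl)

lemma degD_nonneg {Pt : Type} {A : Pt →₀ ℤ} (hA : 0 ≤ A) : 0 ≤ degD A :=
  Finset.sum_nonneg fun x _ => by exact_mod_cast Finsupp.le_def.mp hA x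

lemma degD_mono {Pt : Type} {A B : Pt →₀ ℤ} (hAB : A ≤ B) : degD A ≤ degD B := by
  have h1 : B = A + (B - A) := by abel
  have h2 : (0:Pt →₀ ℤ) ≤ B - A := sub_nonneg.mpr hAB
  have := degD_nonneg h2
  rw [h1, degD_add]; omega

lemma degD_sup_add_inf {Pt : Type} (A B : Pt →₀ ℤ) :
    degD (A ⊔ B) + degD (A ⊓ B) = degD A + degD B := by
  rw [← degD_add, ← degD_add]
  congr 1
  ext x
  show (A x ⊔ B x) + (A x ⊓ B x) = A x + B x
  rcases le_total (A x) (B x) with h | h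
  · rw [max_eq_right h, min_eq_left h]; omega
  · rw [max_eq_left h, min_eq_right h]

theorem stmt_7 (k K : Type) [Field k] [IsAlgClosed k] [Field K] [Algebra k K]
    (Pt : Type)
    (sec : (Pt →₀ ℤ) → Submodule k K)
    (secFD : ∀ D, FiniteDimensional k (sec D))
    -- Riemann–Roch on the elliptic curve:
    (hRR : ∀ D : Pt →₀ ℤ, 0 < degD D → (Module.finrank k (sec D) : ℤ) = degD D)
    -- `|D| ∩ |D'| = |inf{D, D'}|`:
    (hinf : ∀ D D' : Pt →₀ ℤ, sec (D ⊓ D') = sec D ⊓ sec D')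
    (D D' : Pt →₀ ℤ)
    (h : 0 < degD (D ⊓ D')) :
    sec D ⊔ sec D' = sec (D ⊔ D') := by
  have hD : 0 < degD D := lt_of_lt_of_le h (degD_mono inf_le_left)
  have hD' : 0 < degD D' := lt_of_lt_of_le h (degD_mono inf_le_right)
  have hsup : 0 < degD (D ⊔ D') := lt_of_lt_of_le hD (degD_mono le_sup_left)
  -- monotonicity of `sec`, from `hinf`
  have hmono : ∀ A B : Pt →₀ ℤ, A ≤ B → sec A ≤ sec B := by
    intro A B hAB
    have h0 : sec (A ⊓ B) = sec A ⊓ sec B := hinf A B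
    rw [inf_eq_left.mpr hAB] at h0
    rw [h0]
    exact inf_le_right
  have hle : sec D ⊔ sec D' ≤ sec (D ⊔ D') :=
    sup_le (hmono _ _ le_sup_left) (hmono _ _ le_sup_right)
  haveI := secFD D
  haveI := secFD D'
  haveI := secFD (D ⊔ D')
  haveI : FiniteDimensional k ↥(sec D ⊔ sec D') :=
    Submodule.finiteDimensional_of_le hle
  apply Submodule.eq_of_le_of_finrank_le hle
  have hdim := Submodule.finrank_sup_add_finrank_inf_eq (sec D) (sec D')
  rw [← hinf] at hdim
  have e1 := hRR D hD
  have e2 := hRR D' hD'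
  have e3 := hRR (D ⊓ D') h
  have e4 := hRR (D ⊔ D') hsup
  have e5 := degD_sup_add_inf D D'
  omega
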